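/- Let ω : [0,1) → [0,∞) be integrable with ω̂(r) = ∫_r^1 ω(s) ds satisfying the doubling condition ω̂(r) ≤ C ω̂((1+r)/2) for all r ∈ [0,1). For t ∈ (3/4, 1), one has ∫₀^1 s^{1/(1-t)} ω(s) ds ≤ C' ω̂(t) for a constant C' independent of t. -/

import Mathlib

open MeasureTheory

theorem doubling_to_moment_bound (ω : ℝ → ℝ) (hω : ∀ s, 0 ≤ ω s)
    (hint : IntegrableOn ω (Set.Ico (0:ℝ) 1))
    (C : ℝ) (hC : 1 < C)
    (h : ∀ r : ℝ, 0 ≤ r → r < 1 →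
      (∫ s in r..1, ω s) ≤ C * ∫ s in ((1 + r) / 2)..1, ω s) :
    ∃ C' : ℝ, 0 < C' ∧ ∀ t : ℝ, 3 / 4 < t → t < 1 →
      (∫ s in (0:ℝ)..1, s ^ (1 / (1 - t)) * ω s) ≤ C' * ∫ s in t..1, ω s := by
  have hC0 : (0:ℝ) < C := lt_trans one_pos hC
  obtain ⟨m, hm⟩ : ∃ m : ℕ, 2 * C ≤ 2 ^ m := by
    obtain ⟨n, hn⟩ := exists_nat_gt (2 * C)
    exact ⟨n, hn.le.trans (by exact_mod_cast (Nat.lt_two_pow_self (n := n)).le)⟩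
  refine ⟨1 + 2 * C * (m.factorial : ℝ), by positivity, ?_⟩
  intro t ht3 ht1
  have h1t : 0 < 1 - t := by linarith
  set p : ℝ := 1 / (1 - t) with hp
  have hp0 : 0 < p := by positivity
  have hωI : IntegrableOn ω (Set.Icc (0:ℝ) 1) :=
    (integrableOn_Icc_iff_integrableOn_Ico enorm_ne_top).mpr hint
  have husub : ∀ a b : ℝ, 0 ≤ a → a ≤ 1 → 0 ≤ b → b ≤ 1 →
      Set.uIcc a b ⊆ Set.Icc (0:ℝ) 1 :=
    fun a b ha ha' hb hb' => Set.uIcc_subset_Icc ⟨ha, ha'⟩ ⟨hb, hb'⟩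
  have hIω : ∀ a b : ℝ, 0 ≤ a → a ≤ 1 → 0 ≤ b → b ≤ 1 →
      IntervalIntegrable ω volume a b := fun a b ha ha' hb hb' =>
    (hωI.mono_set (husub a b ha ha' hb hb')).intervalIntegrable
  have hcont : ContinuousOn (fun s : ℝ => s ^ p) (Set.Icc 0 1) :=
    (Real.continuous_rpow_const hp0.le).continuousOn
  have hgI : IntegrableOn (fun s : ℝ => s ^ p * ω s) (Set.Icc (0:ℝ) 1) :=
    IntegrableOn.continuousOn_mul hcont hωI isCompact_Icc
  have hIg : ∀ a b : ℝ, 0 ≤ a → a ≤ 1 → 0 ≤ b → b ≤ 1 →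
      IntervalIntegrable (fun s : ℝ => s ^ p * ω s) volume a b := fun a b ha ha' hb hb' =>
    (hgI.mono_set (husub a b ha ha' hb hb')).intervalIntegrable
  have tail_mono : ∀ a b : ℝ, 0 ≤ a → a ≤ b → b ≤ 1 →
      (∫ s in b..1, ω s) ≤ ∫ s in a..1, ω s := by
    intro a b ha hab hb1
    have h1 : (∫ s in a..b, ω s) + (∫ s in b..1, ω s) = ∫ s in a..1, ω s :=
      intervalIntegral.integral_add_adjacent_intervals
        (hIω a b ha (hab.trans hb1) (ha.trans hab) hb1)
        (hIω b 1 (ha.trans hab) hb1 zero_le_one le_rfl)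
    have h2 : 0 ≤ ∫ s in a..b, ω s :=
      intervalIntegral.integral_nonneg hab (fun x _ => hω x)
    linarith
  have seg_le : ∀ a b : ℝ, 0 ≤ a → a ≤ b → b ≤ 1 →
      (∫ s in a..b, ω s) ≤ ∫ s in a..1, ω s := by
    intro a b ha hab hb1
    have h1 : (∫ s in a..b, ω s) + (∫ s in b..1, ω s) = ∫ s in a..1, ω s :=
      intervalIntegral.integral_add_adjacent_intervals
        (hIω a b ha (hab.trans hb1) (ha.trans hab) hb1)
        (hIω b 1 (ha.trans hab) hb1 zero_le_one le_rfl)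
    have h2 : 0 ≤ ∫ s in b..1, ω s :=
      intervalIntegral.integral_nonneg hb1 (fun x _ => hω x)
    linarith
  set A : ℝ := ∫ s in t..1, ω s with hAdef
  have hA : 0 ≤ A :=
    intervalIntegral.integral_nonneg ht1.le (fun x _ => hω x)
  have ht0 : (0:ℝ) ≤ t := by linarith
  -- iterated doubling upward
  have hup : ∀ k : ℕ, 0 ≤ 1 - 2 ^ k * (1 - t) →
      (∫ s in (1 - 2 ^ k * (1 - t))..1, ω s) ≤ C ^ k * A := by
    intro k
    induction k with
    | zero => intro _; simp [hAdef]
    | succ k ih =>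
      intro hr
      have h2k : (0:ℝ) < 2 ^ k := pow_pos two_pos k
      have hps : (2:ℝ) ^ (k+1) = 2 ^ k * 2 := pow_succ 2 k
      have hr' : 0 ≤ 1 - 2 ^ k * (1 - t) := by nlinarith [mul_nonneg h2k.le h1t.le]
      have hlt : 1 - 2 ^ (k+1) * (1 - t) < 1 := by nlinarith [(by positivity : (0:ℝ) < 2 ^ (k+1))]
      have key := h _ hr hlt
      have hmid : (1 + (1 - 2 ^ (k+1) * (1 - t))) / 2 = 1 - 2 ^ k * (1 - t) := by
        rw [hps]; ring
      rw [hmid] at key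
      calc (∫ s in (1 - 2 ^ (k+1) * (1 - t))..1, ω s)
          ≤ C * ∫ s in (1 - 2 ^ k * (1 - t))..1, ω s := key
        _ ≤ C * (C ^ k * A) := mul_le_mul_of_nonneg_left (ih hr') hC0.le
        _ = C ^ (k+1) * A := by ring
  -- iterated doubling from 0
  have hdown : ∀ n : ℕ,
      (∫ s in (0:ℝ)..1, ω s) ≤ C ^ n * ∫ s in (1 - (1/2:ℝ) ^ n)..1, ω s := by
    intro n
    induction n with
    | zero => simp
    | succ n ih =>
      have hpn : (0:ℝ) < (1/2:ℝ) ^ n := by positivity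
      have hpn1 : (1/2:ℝ) ^ n ≤ 1 := pow_le_one₀ (by norm_num) (by norm_num)
      have key := h (1 - (1/2:ℝ) ^ n) (by linarith) (by linarith)
      have hmid : (1 + (1 - (1/2:ℝ) ^ n)) / 2 = 1 - (1/2:ℝ) ^ (n+1) := by
        rw [pow_succ]; ring
      rw [hmid] at key
      calc (∫ s in (0:ℝ)..1, ω s)
          ≤ C ^ n * ∫ s in (1 - (1/2:ℝ) ^ n)..1, ω s := ih
        _ ≤ C ^ n * (C * ∫ s in (1 - (1/2:ℝ) ^ (n+1))..1, ω s) :=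
            mul_le_mul_of_nonneg_left key (pow_nonneg hC0.le n)
        _ = C ^ (n+1) * ∫ s in (1 - (1/2:ℝ) ^ (n+1))..1, ω s := by ring
  -- the dyadic scale K
  have hex : ∃ n : ℕ, (1:ℝ) ≤ 2 ^ n * (1 - t) := by
    obtain ⟨n, hn⟩ := pow_unbounded_of_one_lt (1/(1-t)) (one_lt_two (α := ℝ))
    exact ⟨n, le_of_lt ((div_lt_iff₀ h1t).mp hn)⟩
  set K := Nat.find hex with hKdef
  have hPK : (1:ℝ) ≤ 2 ^ K * (1 - t) := Nat.find_spec hex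
  have hmin : ∀ j, j < K → 2 ^ j * (1 - t) < 1 :=
    fun j hj => not_le.mp (Nat.find_min hex hj)
  have hK1 : 1 ≤ K := by
    rcases Nat.eq_zero_or_pos K with h0 | hpos
    · rw [h0] at hPK; norm_num at hPK; linarith
    · exact hpos
  set b : ℕ → ℝ := fun i => max 0 (1 - 2 ^ (K - i) * (1 - t)) with hbdef
  have hb0 : b 0 = 0 := by
    show max 0 (1 - 2 ^ (K - 0) * (1 - t)) = 0
    rw [Nat.sub_zero]
    exact max_eq_left (by linarith)
  have hbK : b K = t := by
    show max 0 (1 - 2 ^ (K - K) * (1 - t)) = t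
    rw [Nat.sub_self, pow_zero, one_mul]
    have he : 1 - (1 - t) = t := by ring
    rw [he]
    exact max_eq_right ht0
  have hbpos : ∀ i, 0 ≤ b i := fun i => le_max_left _ _
  have hble : ∀ i, b i ≤ 1 := by
    intro i
    apply max_le (by norm_num)
    have : (0:ℝ) < 2 ^ (K - i) * (1 - t) := by positivity
    linarith
  have hbmono : ∀ i j : ℕ, i ≤ j → b i ≤ b j := by
    intro i j hij
    have h1 : (2:ℝ) ^ (K - j) ≤ 2 ^ (K - i) :=
      pow_le_pow_right₀ one_le_two (Nat.sub_le_sub_left hij K)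
    have h2 := mul_le_mul_of_nonneg_right h1 h1t.le
    exact max_le_max le_rfl (by linarith)
  have hbval : ∀ i : ℕ, 1 ≤ i → i ≤ K → b i = 1 - 2 ^ (K - i) * (1 - t) := by
    intro i hi1 hiK
    have := hmin (K - i) (by omega)
    exact max_eq_right (by linarith)
  -- tail bound at each b i
  have tailb : ∀ i, i < K → (∫ s in (b i)..1, ω s) ≤ C ^ (K - i) * A := by
    intro i hi
    rcases Nat.eq_zero_or_pos i with rfl | hipos
    · rw [hb0, Nat.sub_zero]
      have h2K : (0:ℝ) < 2 ^ K := pow_pos two_pos K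
      have hhalf : (1/2:ℝ) ^ K = 1 / 2 ^ K := by rw [div_pow, one_pow]
      have ht' : t ≤ 1 - (1/2:ℝ) ^ K := by
        rw [hhalf]
        have : (1:ℝ) / 2 ^ K ≤ 1 - t := (div_le_iff₀ h2K).mpr (by linarith)
        linarith
      have hK0 : (0:ℝ) ≤ 1 - (1/2:ℝ) ^ K := by linarith
      have hpn : (0:ℝ) < (1/2:ℝ) ^ K := by positivity
      calc (∫ s in (0:ℝ)..1, ω s)
          ≤ C ^ K * ∫ s in (1 - (1/2:ℝ) ^ K)..1, ω s := hdown K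
        _ ≤ C ^ K * A :=
            mul_le_mul_of_nonneg_left
              (tail_mono t (1 - (1/2:ℝ) ^ K) ht0 ht' (by linarith)) (pow_nonneg hC0.le K)
    · rw [hbval i hipos hi.le]
      have := hmin (K - i) (by omega)
      exact hup (K - i) (by linarith)
  -- per-piece bound
  have piece : ∀ i, i < K →
      (∫ s in (b i)..(b (i+1)), s ^ p * ω s) ≤
        Real.exp (-(2:ℝ) ^ (K - 1 - i)) * (C ^ (K - 1 - i + 1) * A) := by
    intro i hi
    set k := K - 1 - i with hkdef
    have hKi : K - i = k + 1 := by omega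
    have hKi1 : K - (i+1) = k := by omega
    have hkK : k < K := by omega
    have hτ : b (i+1) = 1 - 2 ^ k * (1 - t) := by
      rw [hbval (i+1) (by omega) (by omega), hKi1]
    have hτ1 : 2 ^ k * (1 - t) < 1 := hmin k hkK
    have hτ0 : (0:ℝ) ≤ 1 - 2 ^ k * (1 - t) := by
      have : (0:ℝ) < 2 ^ k * (1 - t) := by positivity
      linarith
    have hpt : ∀ s ∈ Set.Icc (b i) (b (i+1)), s ^ p * ω s ≤ Real.exp (-(2:ℝ) ^ k) * ω s := by
      intro s hs
      have hs0 : 0 ≤ s := le_trans (hbpos i) hs.1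
      have hsτ : s ≤ 1 - 2 ^ k * (1 - t) := hτ ▸ hs.2
      have h1 : s ^ p ≤ (1 - 2 ^ k * (1 - t)) ^ p := Real.rpow_le_rpow hs0 hsτ hp0.le
      have h2 : (1 - 2 ^ k * (1 - t)) ≤ Real.exp (-(2 ^ k * (1 - t))) := by
        have := Real.add_one_le_exp (-(2 ^ k * (1 - t)))
        linarith
      have h3 : (1 - 2 ^ k * (1 - t)) ^ p ≤ (Real.exp (-(2 ^ k * (1 - t)))) ^ p :=
        Real.rpow_le_rpow hτ0 h2 hp0.le
      have h4 : (Real.exp (-(2 ^ k * (1 - t)))) ^ p = Real.exp (-(2:ℝ) ^ k) := by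
        rw [← Real.exp_mul]
        congr 1
        rw [hp]
        field_simp
      have h5 : s ^ p ≤ Real.exp (-(2:ℝ) ^ k) := by
        calc s ^ p ≤ (1 - 2 ^ k * (1 - t)) ^ p := h1
          _ ≤ (Real.exp (-(2 ^ k * (1 - t)))) ^ p := h3
          _ = Real.exp (-(2:ℝ) ^ k) := h4
      exact mul_le_mul_of_nonneg_right h5 (hω s)
    have hab : b i ≤ b (i+1) := hbmono i (i+1) (by omega)
    have hbi0 := hbpos i
    have hbi1 := hble i
    have hbj0 := hbpos (i+1)
    have hbj1 := hble (i+1)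
    have hmono := intervalIntegral.integral_mono_on hab
      (hIg (b i) (b (i+1)) hbi0 hbi1 hbj0 hbj1)
      ((hIω (b i) (b (i+1)) hbi0 hbi1 hbj0 hbj1).const_mul _) hpt
    have hcm : (∫ s in (b i)..(b (i+1)), Real.exp (-(2:ℝ) ^ k) * ω s)
        = Real.exp (-(2:ℝ) ^ k) * ∫ s in (b i)..(b (i+1)), ω s :=
      intervalIntegral.integral_const_mul _ _
    have hseg : (∫ s in (b i)..(b (i+1)), ω s) ≤ C ^ (k+1) * A := by
      calc (∫ s in (b i)..(b (i+1)), ω s)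
          ≤ ∫ s in (b i)..1, ω s := seg_le (b i) (b (i+1)) hbi0 hab hbj1
        _ ≤ C ^ (K - i) * A := tailb i hi
        _ = C ^ (k+1) * A := by rw [hKi]
    calc (∫ s in (b i)..(b (i+1)), s ^ p * ω s)
        ≤ ∫ s in (b i)..(b (i+1)), Real.exp (-(2:ℝ) ^ k) * ω s := hmono
      _ = Real.exp (-(2:ℝ) ^ k) * ∫ s in (b i)..(b (i+1)), ω s := hcm
      _ ≤ Real.exp (-(2:ℝ) ^ k) * (C ^ (k+1) * A) :=
          mul_le_mul_of_nonneg_left hseg (Real.exp_nonneg _)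
  -- uniform term bound
  have termb : ∀ k : ℕ,
      Real.exp (-(2:ℝ) ^ k) * (C ^ (k+1) * A) ≤ (m.factorial : ℝ) * (1/2) ^ k * (C * A) := by
    intro k
    have h2k : (0:ℝ) < 2 ^ k := pow_pos two_pos k
    have hE : (0:ℝ) < Real.exp ((2:ℝ) ^ k) := Real.exp_pos _
    have hm0 : (0:ℝ) < (m.factorial : ℝ) := by exact_mod_cast Nat.factorial_pos m
    have e1 : ((2:ℝ) ^ k) ^ m / (m.factorial : ℝ) ≤ Real.exp ((2:ℝ) ^ k) :=
      Real.pow_div_factorial_le_exp _ h2k.le m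
    have e2 : ((2:ℝ) * C) ^ k ≤ (m.factorial : ℝ) * Real.exp ((2:ℝ) ^ k) := by
      calc ((2:ℝ) * C) ^ k ≤ ((2:ℝ) ^ m) ^ k := pow_le_pow_left₀ (by positivity) hm k
        _ = ((2:ℝ) ^ k) ^ m := by rw [← pow_mul, ← pow_mul, Nat.mul_comm]
        _ ≤ (m.factorial : ℝ) * Real.exp ((2:ℝ) ^ k) := by
            rw [div_le_iff₀ hm0] at e1
            linarith
    have e3 : C ^ (k+1) * 2 ^ k ≤ (m.factorial : ℝ) * C * Real.exp ((2:ℝ) ^ k) := by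
      calc C ^ (k+1) * 2 ^ k = C * (2 * C) ^ k := by rw [mul_pow, pow_succ]; ring
        _ ≤ C * ((m.factorial : ℝ) * Real.exp ((2:ℝ) ^ k)) := mul_le_mul_of_nonneg_left e2 hC0.le
        _ = (m.factorial : ℝ) * C * Real.exp ((2:ℝ) ^ k) := by ring
    have key : Real.exp (-(2:ℝ) ^ k) * C ^ (k+1) ≤ (m.factorial : ℝ) * (1/2) ^ k * C := by
      calc Real.exp (-(2:ℝ) ^ k) * C ^ (k+1)
          = C ^ (k+1) / Real.exp ((2:ℝ) ^ k) := by rw [Real.exp_neg]; ring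
        _ ≤ ((m.factorial : ℝ) * C) / (2:ℝ) ^ k := by
            rw [div_le_div_iff₀ hE h2k]; linarith
        _ = (m.factorial : ℝ) * (1/2) ^ k * C := by rw [div_pow, one_pow]; ring
    calc Real.exp (-(2:ℝ) ^ k) * (C ^ (k+1) * A)
        = (Real.exp (-(2:ℝ) ^ k) * C ^ (k+1)) * A := by ring
      _ ≤ ((m.factorial : ℝ) * (1/2) ^ k * C) * A := mul_le_mul_of_nonneg_right key hA
      _ = (m.factorial : ℝ) * (1/2) ^ k * (C * A) := by ring
  -- sum over pieces
  have hsplit : ∑ i ∈ Finset.range K, (∫ s in (b i)..(b (i+1)), s ^ p * ω s)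
      = ∫ s in (0:ℝ)..t, s ^ p * ω s := by
    have := intervalIntegral.sum_integral_adjacent_intervals
      (f := fun s : ℝ => s ^ p * ω s) (a := b) (n := K)
      (fun i _ => hIg (b i) (b (i+1)) (hbpos i) (hble i) (hbpos (i+1)) (hble (i+1)))
    rw [hb0, hbK] at this
    exact this
  have hsum1 : ∑ i ∈ Finset.range K, (∫ s in (b i)..(b (i+1)), s ^ p * ω s)
      ≤ ∑ i ∈ Finset.range K, ((m.factorial : ℝ) * (1/2) ^ (K - 1 - i) * (C * A)) :=
    Finset.sum_le_sum (fun i hi =>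
      ((piece i (Finset.mem_range.mp hi)).trans (termb (K - 1 - i))))
  have hsum2 : ∑ i ∈ Finset.range K, ((m.factorial : ℝ) * (1/2:ℝ) ^ (K - 1 - i) * (C * A))
      ≤ 2 * ((m.factorial : ℝ) * (C * A)) := by
    have hrefl := Finset.sum_range_reflect (fun j => (m.factorial : ℝ) * (1/2:ℝ) ^ j * (C * A)) K
    rw [hrefl]
    have : ∑ j ∈ Finset.range K, ((m.factorial : ℝ) * (1/2:ℝ) ^ j * (C * A))
        = (∑ j ∈ Finset.range K, (1/2:ℝ) ^ j) * ((m.factorial : ℝ) * (C * A)) := by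
      rw [Finset.sum_mul]
      refine Finset.sum_congr rfl (fun j _ => by ring)
    rw [this]
    exact mul_le_mul_of_nonneg_right (sum_geometric_two_le K)
      (mul_nonneg (Nat.cast_nonneg _) (mul_nonneg hC0.le hA))
  have hfirst : (∫ s in (0:ℝ)..t, s ^ p * ω s) ≤ 2 * ((m.factorial : ℝ) * (C * A)) := by
    rw [← hsplit]
    exact hsum1.trans hsum2
  have hsecond : (∫ s in t..1, s ^ p * ω s) ≤ A := by
    have hpt : ∀ s ∈ Set.Icc t 1, s ^ p * ω s ≤ ω s := by
      intro s hs
      have hs0 : 0 ≤ s := le_trans ht0 hs.1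
      exact mul_le_of_le_one_left (hω s) (Real.rpow_le_one hs0 hs.2 hp0.le)
    exact intervalIntegral.integral_mono_on ht1.le
      (hIg t 1 ht0 ht1.le zero_le_one le_rfl)
      (hIω t 1 ht0 ht1.le zero_le_one le_rfl) hpt
  have htotal : (∫ s in (0:ℝ)..1, s ^ p * ω s)
      = (∫ s in (0:ℝ)..t, s ^ p * ω s) + ∫ s in t..1, s ^ p * ω s :=
    (intervalIntegral.integral_add_adjacent_intervals
      (hIg 0 t le_rfl zero_le_one ht0 ht1.le)
      (hIg t 1 ht0 ht1.le zero_le_one le_rfl)).symm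
  have hring : 2 * ((m.factorial : ℝ) * (C * A)) + A = (1 + 2 * C * (m.factorial : ℝ)) * A := by ring
  rw [htotal]
  linarith
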